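/- Let A be a commutative ring, I ⊂ A an ideal with I^2 = 0, A_0 = A/I. Let 0 → J → M → M_0 → 0 be an extension of A-modules with J and M_0 killed by I, such that the canonical map M ⊗_A A_0 → M_0 is an isomorphism. Then M is flat over A if and only if M_0 is flat over A_0 and the induced map u : I ⊗_{A_0} M_0 → J (given by the multiplication I × M → J) is an isomorphism. -/

import Mathlib

/-!
Local criterion of flatness for square-zero extensions: `A` a commutative ring, `I ⊆ A` an
ideal of square zero, `A₀ = A/I`.  Given an extension of `A`-modules `0 → J → E → M₀ → 0`
with `J` and `M₀` killed by `I`, such that the canonical map `E ⊗_A A₀ = E/IE → M₀` is an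
isomorphism, and given the map `u : I ⊗ M₀ → J` induced by multiplication (characterized by
`ι (u (a ⊗ π e)) = a • e`; note `I ⊗_{A₀} M₀ = I ⊗_A M₀` since `I² = 0`), the module `E` is
flat over `A` iff `M₀` is flat over `A₀` and `u` is an isomorphism.
-/

universe u

open TensorProduct

private lemma mkSmul_aux {A : Type u} [CommRing A] {I : Ideal A}
    {X : Type u} [AddCommGroup X] [Module A X] [Module (A ⧸ I) X]
    [IsScalarTower A (A ⧸ I) X] (a : A) (x : X) :
    (Ideal.Quotient.mk I a) • x = a • x := by
  rw [← Ideal.Quotient.algebraMap_eq, algebraMap_smul]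

private lemma compat_aux {A : Type u} [CommRing A] {I : Ideal A}
    (X Y : Type u) [AddCommGroup X] [Module A X] [Module (A ⧸ I) X] [IsScalarTower A (A ⧸ I) X]
    [AddCommGroup Y] [Module A Y] [Module (A ⧸ I) Y] [IsScalarTower A (A ⧸ I) Y] :
    TensorProduct.CompatibleSMul A (A ⧸ I) X Y := by
  constructor
  intro b x y
  obtain ⟨a, rfl⟩ := Ideal.Quotient.mk_surjective b
  rw [mkSmul_aux, mkSmul_aux, smul_tmul]

private lemma smulcomm_aux {A : Type u} [CommRing A] {I : Ideal A}
    (X : Type u) [AddCommGroup X] [Module A X] [Module (A ⧸ I) X]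
    [IsScalarTower A (A ⧸ I) X] : SMulCommClass (A ⧸ I) A X := by
  constructor
  intro b a x
  obtain ⟨a', rfl⟩ := Ideal.Quotient.mk_surjective b
  rw [mkSmul_aux, mkSmul_aux, smul_smul, smul_smul, mul_comm]

private lemma bridge_aux {A : Type u} [CommRing A] {I : Ideal A}
    (M0 X Y : Type u)
    [AddCommGroup M0] [Module A M0] [Module (A ⧸ I) M0] [IsScalarTower A (A ⧸ I) M0]
    [AddCommGroup X] [Module A X] [Module (A ⧸ I) X] [IsScalarTower A (A ⧸ I) X]
    [AddCommGroup Y] [Module A Y] [Module (A ⧸ I) Y] [IsScalarTower A (A ⧸ I) Y]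
    [Module.Flat (A ⧸ I) M0]
    (f : X →ₗ[A] Y) (hf : Function.Injective f) :
    Function.Injective (LinearMap.rTensor M0 f) := by
  haveI := compat_aux (I := I) X M0
  haveI := compat_aux (I := I) Y M0
  haveI := smulcomm_aux (I := I) X
  haveI := smulcomm_aux (I := I) Y
  have hmk : Function.Surjective (algebraMap A (A ⧸ I)) := by
    rw [Ideal.Quotient.algebraMap_eq]; exact Ideal.Quotient.mk_surjective
  let eX := TensorProduct.equivOfCompatibleSMul (A ⧸ I) A (A ⧸ I) X M0
  let eY := TensorProduct.equivOfCompatibleSMul (A ⧸ I) A (A ⧸ I) Y M0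
  let fB := f.extendScalarsOfSurjective hmk
  have hfB : Function.Injective fB := fun a b h => hf h
  have hinjB : Function.Injective (LinearMap.rTensor M0 fB) :=
    Module.Flat.rTensor_preserves_injective_linearMap fB hfB
  have hcomm : ∀ t : X ⊗[A] M0,
      eY (LinearMap.rTensor M0 f t) = LinearMap.rTensor M0 fB (eX t) := by
    intro t
    refine TensorProduct.induction_on t ?_ ?_ ?_
    · simp
    · intro x m; rfl
    · intro s t hs ht
      simp only [map_add, hs, ht]
  intro s t h
  apply eX.injective
  apply hinjB
  rw [← hcomm, ← hcomm, h]


private lemma mulB_inj_aux {A : Type u} [CommRing A] {I : Ideal A}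
    (M0 : Type u) [AddCommGroup M0] [Module A M0] [Module (A ⧸ I) M0]
    [IsScalarTower A (A ⧸ I) M0]
    (Ξ : ((A ⧸ I) ⊗[A] M0) →ₗ[A] M0) (hΞ : ∀ (b : A ⧸ I) (m : M0), Ξ (b ⊗ₜ[A] m) = b • m) :
    Function.Injective Ξ := by
  haveI := compat_aux (I := I) (A ⧸ I) M0
  haveI := smulcomm_aux (I := I) (A ⧸ I)
  set e := TensorProduct.equivOfCompatibleSMul (A ⧸ I) A (A ⧸ I) (A ⧸ I) M0 with he
  have h : ∀ w, Ξ w = TensorProduct.lid (A ⧸ I) M0 (e w) := by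
    intro w
    refine TensorProduct.induction_on w ?_ ?_ ?_
    · simp
    · intro b m
      rw [hΞ]
      rfl
    · intro s t hs ht
      rw [map_add, map_add, map_add, hs, ht]
  intro s t hh
  apply e.injective
  apply (TensorProduct.lid (A ⧸ I) M0).injective
  rw [← h, ← h, hh]

set_option maxHeartbeats 1000000 in
theorem flat_iff_of_squareZero_extension
    (A : Type u) [CommRing A] (I : Ideal A) (hI : I * I = ⊥)
    (M0 J E : Type u) [AddCommGroup M0] [Module A M0] [AddCommGroup J] [Module A J]
    [AddCommGroup E] [Module A E]
    (hM0 : ∀ a ∈ I, ∀ x : M0, a • x = 0) (hJ : ∀ a ∈ I, ∀ x : J, a • x = 0)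
    (ι : J →ₗ[A] E) (π : E →ₗ[A] M0)
    (hinj : Function.Injective ι) (hsurj : Function.Surjective π)
    (hexact : LinearMap.range ι = LinearMap.ker π)
    -- the canonical map `E ⊗_A A₀ = E/IE → M₀` is an isomorphism:
    (hcan : Function.Bijective (Submodule.liftQ (I • (⊤ : Submodule A E)) π (by
      rw [Submodule.smul_le]
      rintro a ha e -
      rw [LinearMap.mem_ker, map_smul]
      exact hM0 a ha _)))
    -- the map `u : I ⊗ M₀ → J` induced by multiplication `I × E → J`:
    (u0 : ((I : Submodule A A) ⊗[A] M0) →ₗ[A] J)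
    (hu0 : ∀ (a : I) (e : E), ι (u0 ((a : I) ⊗ₜ[A] π e)) = (a : A) • e) :
    Module.Flat A E ↔
      ((letI : Module (A ⧸ I) M0 :=
          Module.IsTorsionBySet.module (fun x a => hM0 a.1 a.2 x)
        Module.Flat (A ⧸ I) M0) ∧ Function.Bijective u0) := by
  letI instB : Module (A ⧸ I) M0 := Module.IsTorsionBySet.module (fun x a => hM0 a.1 a.2 x)
  haveI towerM0 : IsScalarTower A (A ⧸ I) M0 :=
    Module.IsTorsionBySet.isScalarTower (fun x a => hM0 a.1 a.2 x)
  have hmk : Function.Surjective (algebraMap A (A ⧸ I)) := by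
    rw [Ideal.Quotient.algebraMap_eq]; exact Ideal.Quotient.mk_surjective
  -- kernel of π is I•E
  have hker : LinearMap.ker π = I • (⊤ : Submodule A E) := by
    refine le_antisymm ?_ ?_
    · intro e he
      have h0 : Submodule.Quotient.mk (p := I • (⊤ : Submodule A E)) e = 0 := by
        apply hcan.1
        simpa using he
      simpa [Submodule.Quotient.mk_eq_zero] using h0
    · rw [Submodule.smul_le]
      rintro a ha e -
      rw [LinearMap.mem_ker, map_smul]
      exact hM0 a ha _
  have hrange : LinearMap.range ι = I • (⊤ : Submodule A E) := hexact.trans hker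
  -- Z : torsion modules tensor I•E to zero
  have Z : ∀ (N : Type u) [AddCommGroup N] [Module A N], (∀ c ∈ I, ∀ n : N, c • n = 0) →
      ∀ (n : N) (e : E), e ∈ I • (⊤ : Submodule A E) → (n ⊗ₜ[A] e : N ⊗[A] E) = 0 := by
    intro N _ _ hN n e he
    refine Submodule.smul_induction_on he ?_ ?_
    · intro r hr m _
      rw [tmul_smul, smul_tmul', hN r hr, zero_tmul]
    · intro x y hx hy
      rw [tmul_add, hx, hy, add_zero]
  -- W : for torsion N, lTensor N π is bijective
  have W : ∀ (N : Type u) [AddCommGroup N] [Module A N], (∀ c ∈ I, ∀ n : N, c • n = 0) →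
      Function.Bijective (LinearMap.lTensor N π) := by
    intro N _ _ hN
    constructor
    · have hex : Function.Exact (LinearMap.lTensor N ι) (LinearMap.lTensor N π) :=
        lTensor_exact N (LinearMap.exact_iff.mpr hexact.symm) hsurj
      have h0 : LinearMap.lTensor N ι = 0 := TensorProduct.ext' fun n j => by
        have hj : ι j ∈ I • (⊤ : Submodule A E) := hrange ▸ LinearMap.mem_range_self ι j
        simpa using Z N hN n (ι j) hj
      rw [← LinearMap.ker_eq_bot, LinearMap.exact_iff.mp hex, h0, LinearMap.range_zero]
    · exact LinearMap.lTensor_surjective N hsurj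
  -- multiplication maps
  let Lmul : ∀ (a : Ideal A), (↥a ⊗[A] E) →ₗ[A] E := fun a =>
    (TensorProduct.lid A E).toLinearMap ∘ₗ LinearMap.rTensor E a.subtype
  have Lmul_tmul : ∀ (a : Ideal A) (x : ↥a) (e : E), Lmul a (x ⊗ₜ[A] e) = (x : A) • e := by
    intro a x e; simp [Lmul]
  -- torsion for subideals of I
  have torsub : ∀ (a : Ideal A), a ≤ I → ∀ c ∈ I, ∀ n : ↥a, c • n = 0 := by
    intro a hle c hc n
    apply Subtype.ext
    show c • (n : A) = 0
    rw [smul_eq_mul]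
    have h : c * (n : A) ∈ I * I := Ideal.mul_mem_mul hc (hle n.2)
    rwa [hI, Submodule.mem_bot] at h
  -- u0 is always surjective
  have hu0surj : Function.Surjective u0 := by
    intro j
    have hle : I • (⊤ : Submodule A E) ≤ LinearMap.range (ι ∘ₗ u0) := by
      rw [Submodule.smul_le]
      rintro c hc e -
      exact ⟨(⟨c, hc⟩ : I) ⊗ₜ[A] π e, hu0 ⟨c, hc⟩ e⟩
    have hj : ι j ∈ LinearMap.range (ι ∘ₗ u0) :=
      hle (hrange ▸ LinearMap.mem_range_self ι j)
    obtain ⟨t, ht⟩ := hj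
    exact ⟨t, hinj ht⟩
  have torI : ∀ c ∈ I, ∀ n : ↥(I : Ideal A), c • n = 0 := torsub I le_rfl
  constructor
  · -- E flat ⇒ M0 flat over A⧸I and u0 bijective
    intro hE
    haveI := hE
    refine ⟨?_, ?_, hu0surj⟩
    · -- flatness of M0
      haveI : Module.Flat (A ⧸ I) ((A ⧸ I) ⊗[A] E) := inferInstance
      let e1 : ((A ⧸ I) ⊗[A] E) ≃ₗ[A] (E ⧸ I • (⊤ : Submodule A E)) :=
        TensorProduct.quotTensorEquivQuotSMul E I
      let e2 : (E ⧸ I • (⊤ : Submodule A E)) ≃ₗ[A] M0 := LinearEquiv.ofBijective _ hcan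
      let e3 : ((A ⧸ I) ⊗[A] E) ≃ₗ[A ⧸ I] M0 := (e1.trans e2).extendScalarsOfSurjective hmk
      exact Module.Flat.of_linearEquiv e3.symm
    · -- injectivity of u0
      have hWI := W ↥(I : Ideal A) torI
      have hrT := (Module.Flat.iff_rTensor_injective' (R := A) (M := E)).mp hE I
      have hLmulI : Function.Injective (Lmul I) := by
        intro s t h
        simp only [Lmul, LinearMap.coe_comp, LinearEquiv.coe_coe, Function.comp_apply] at h
        exact hrT ((TensorProduct.lid A E).injective h)
      have key : ∀ x : ↥(I : Ideal A) ⊗[A] E,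
          ι (u0 (LinearMap.lTensor _ π x)) = Lmul I x := by
        intro x
        refine TensorProduct.induction_on x ?_ ?_ ?_
        · simp
        · intro c e
          simpa [Lmul_tmul] using hu0 c e
        · intro p q hp hq
          simp only [map_add, hp, hq]
      intro s t h
      obtain ⟨s', rfl⟩ := hWI.2 s
      obtain ⟨t', rfl⟩ := hWI.2 t
      have h2 : Lmul I s' = Lmul I t' := by
        rw [← key, ← key, h]
      exact congrArg _ (hLmulI h2)
  · -- converse
    rintro ⟨hflat, hu0i, _⟩
    haveI hflat' : Module.Flat (A ⧸ I) M0 := hflat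
    -- part 1 : ideals inside I
    have part1 : ∀ (a : Ideal A) (hle : a ≤ I), Function.Injective (Lmul a) := by
      intro a hle
      letI : Module (A ⧸ I) ↥a :=
        Module.IsTorsionBySet.module (fun x c => torsub a hle c.1 c.2 x)
      haveI : IsScalarTower A (A ⧸ I) ↥a :=
        Module.IsTorsionBySet.isScalarTower (fun x c => torsub a hle c.1 c.2 x)
      letI : Module (A ⧸ I) ↥(I : Ideal A) :=
        Module.IsTorsionBySet.module (fun x c => torI c.1 c.2 x)
      haveI : IsScalarTower A (A ⧸ I) ↥(I : Ideal A) :=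
        Module.IsTorsionBySet.isScalarTower (fun x c => torI c.1 c.2 x)
      have hW := W ↥a (torsub a hle)
      have hincl : Function.Injective
          (LinearMap.rTensor M0 (Submodule.inclusion hle)) :=
        bridge_aux (I := I) M0 ↥a ↥(I : Ideal A) (Submodule.inclusion hle)
          (Submodule.inclusion_injective hle)
      have key : ∀ t : ↥a ⊗[A] E,
          ι (u0 (LinearMap.rTensor M0 (Submodule.inclusion hle)
            (LinearMap.lTensor ↥a π t))) = Lmul a t := by
        intro t
        refine TensorProduct.induction_on t ?_ ?_ ?_
        · simp
        · intro x e
          simpa [Lmul_tmul] using hu0 (Submodule.inclusion hle x) e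
        · intro p q hp hq
          simp only [map_add, hp, hq]
      intro s t h
      apply hW.1
      apply hincl
      apply hu0i
      apply hinj
      rw [key, key, h]
    -- general ideals
    rw [Module.Flat.iff_rTensor_injective' (R := A) (M := E)]
    intro a
    have hLmul : Function.Injective (Lmul a) := by
      rw [injective_iff_map_eq_zero]
      intro x hx
      set a0 : Ideal (A ⧸ I) := a.map (Ideal.Quotient.mk I) with ha0
      have hNa0 : ∀ c ∈ I, ∀ n : ↥a0, c • n = 0 := by
        intro c hc n
        apply Subtype.ext
        show c • (n : A ⧸ I) = 0
        rw [Algebra.smul_def, Ideal.Quotient.algebraMap_eq,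
          Ideal.Quotient.eq_zero_iff_mem.mpr hc, zero_mul]
      -- the projection map p : a → a0
      let p : ↥a →ₗ[A] ↥a0 :=
        { toFun := fun x => ⟨Ideal.Quotient.mk I x.1, Ideal.mem_map_of_mem _ x.2⟩
          map_add' := fun x y => Subtype.ext (map_add _ _ _)
          map_smul' := fun c x => Subtype.ext (by
            show Ideal.Quotient.mk I ((c • x : ↥a) : A) = c • (Ideal.Quotient.mk I x.1)
            simp [Algebra.smul_def, Ideal.Quotient.algebraMap_eq, smul_eq_mul]) }
      have psurj : Function.Surjective p := by
        rintro ⟨y, hy⟩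
        obtain ⟨x, hx, rfl⟩ :=
          (Ideal.mem_map_iff_of_surjective _ Ideal.Quotient.mk_surjective).mp hy
        exact ⟨⟨x, hx⟩, rfl⟩
      let inc : ↥(a ⊓ I) →ₗ[A] ↥a := Submodule.inclusion inf_le_left
      have pexact : Function.Exact inc p := by
        intro z
        constructor
        · intro hz
          have hz1 : Ideal.Quotient.mk I (z : A) = 0 := congrArg Subtype.val hz
          have hzI : (z : A) ∈ I := Ideal.Quotient.eq_zero_iff_mem.mp hz1
          exact ⟨⟨(z : A), ⟨z.2, hzI⟩⟩, rfl⟩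
        · rintro ⟨y, rfl⟩
          apply Subtype.ext
          show Ideal.Quotient.mk I ((inc y : ↥a) : A) = 0
          exact Ideal.Quotient.eq_zero_iff_mem.mpr y.2.2
      have hexact2 : Function.Exact (LinearMap.rTensor E inc) (LinearMap.rTensor E p) :=
        rTensor_exact E pexact psurj
      -- the map Φ : a0 ⊗[A] M0 → M0
      haveI scM0 : SMulCommClass (A ⧸ I) A M0 := smulcomm_aux (I := I) M0
      let Ξ₀ : (A ⧸ I) →ₗ[A] (M0 →ₗ[A] M0) :=
        { toFun := fun b =>
            { toFun := fun m => b • m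
              map_add' := fun m n => smul_add _ _ _
              map_smul' := fun c m => smul_comm _ _ _ }
          map_add' := fun b b' => LinearMap.ext fun m => add_smul _ _ _
          map_smul' := fun c b => LinearMap.ext fun m => smul_assoc c b m }
      let Ξ : ((A ⧸ I) ⊗[A] M0) →ₗ[A] M0 := TensorProduct.lift Ξ₀
      have hΞ : ∀ (b : A ⧸ I) (m : M0), Ξ (b ⊗ₜ[A] m) = b • m := fun b m => rfl
      have hΞinj : Function.Injective Ξ := mulB_inj_aux M0 Ξ hΞ
      have hsub : Function.Injective
          (LinearMap.rTensor M0 ((a0.subtype).restrictScalars A)) :=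
        bridge_aux (I := I) M0 ↥a0 (A ⧸ I) ((a0.subtype).restrictScalars A)
          (fun s t h => Subtype.ext h)
      let Φ : (↥a0 ⊗[A] M0) →ₗ[A] M0 :=
        Ξ ∘ₗ LinearMap.rTensor M0 ((a0.subtype).restrictScalars A)
      have hΦ_tmul : ∀ (z : ↥a0) (m : M0), Φ (z ⊗ₜ[A] m) = (z : A ⧸ I) • m := by
        intro z m
        show Ξ (LinearMap.rTensor M0 ((a0.subtype).restrictScalars A) (z ⊗ₜ[A] m)) = _
        rw [LinearMap.rTensor_tmul]
        exact hΞ _ m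
      have hΦ : Function.Injective Φ := by
        have : ⇑Φ = ⇑Ξ ∘ ⇑(LinearMap.rTensor M0 ((a0.subtype).restrictScalars A)) := rfl
        rw [this]
        exact hΞinj.comp hsub
      -- key identity
      have key2 : ∀ t : ↥a ⊗[A] E,
          Φ (LinearMap.lTensor ↥a0 π (LinearMap.rTensor E p t)) = π (Lmul a t) := by
        intro t
        refine TensorProduct.induction_on t ?_ ?_ ?_
        · simp
        · intro z e
          rw [LinearMap.rTensor_tmul, LinearMap.lTensor_tmul, hΦ_tmul, Lmul_tmul, map_smul]
          exact mkSmul_aux (z : A) (π e)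
        · intro s t hs ht
          simp only [map_add, hs, ht]
      -- the chase
      have h1 : Φ (LinearMap.lTensor ↥a0 π (LinearMap.rTensor E p x)) = 0 := by
        rw [key2, hx, map_zero]
      have h2 : LinearMap.rTensor E p x = 0 := by
        apply (W ↥a0 hNa0).1
        rw [map_zero]
        exact hΦ (h1.trans (map_zero Φ).symm)
      obtain ⟨y, rfl⟩ := (hexact2 x).mp h2
      have hnat : Lmul a (LinearMap.rTensor E inc y) = Lmul (a ⊓ I) y := by
        refine TensorProduct.induction_on y ?_ ?_ ?_
        · simp
        · intro z e
          rw [LinearMap.rTensor_tmul, Lmul_tmul, Lmul_tmul]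
          rfl
        · intro s t hs ht
          simp only [map_add, hs, ht]
      have hy0 : y = 0 := by
        apply (injective_iff_map_eq_zero _).mp (part1 (a ⊓ I) inf_le_right)
        rw [← hnat]
        exact hx
      rw [hy0, map_zero]
    intro s t h
    apply hLmul
    show (TensorProduct.lid A E) (LinearMap.rTensor E a.subtype s) =
      (TensorProduct.lid A E) (LinearMap.rTensor E a.subtype t)
    rw [h]
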